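/- Let G be a group and H a subgroup of G. Then H is characteristic in G if and only if there exist a multiplicative morphism property W on Grp with isomorphisms W ≤ W (i.e., W contains every isomorphism of Grp), a functor C : WideSubcategory W ⥤ WideSubcategory W, and a natural transformation η : C ⟶ 𝟭 (WideSubcategory W), such that H equals the range of the underlying group homomorphism of the component η.app G. -/

import Mathlib

open CategoryTheory

section Aux

variable (G : GrpCat) (H : Subgroup G)

/-- The transport of `H` to any group isomorphic to `G` (and `⊥` elsewhere). -/
noncomputable def Kf (A : GrpCat) : Subgroup A :=
  open Classical in
  if h : Nonempty ((G : Type _) ≃* (A : Type _)) then H.map h.some.toMonoidHom else ⊥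

lemma Kf_self (hH : H.Characteristic) : Kf G H G = H := by
  rw [Kf, dif_pos ⟨MulEquiv.refl _⟩]
  exact Subgroup.characteristic_iff_map_eq.mp hH _

lemma Kf_map (hH : H.Characteristic) {A B : GrpCat} (e : (A : Type _) ≃* (B : Type _)) :
    (Kf G H A).map e.toMonoidHom = Kf G H B := by
  by_cases h : Nonempty ((G : Type _) ≃* (A : Type _))
  · have h' : Nonempty ((G : Type _) ≃* (B : Type _)) := ⟨h.some.trans e⟩
    rw [Kf, Kf, dif_pos h, dif_pos h']
    set a := h.some
    set b := h'.some
    have σH : H.map ((a.trans e).trans b.symm).toMonoidHom = H :=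
      Subgroup.characteristic_iff_map_eq.mp hH _
    rw [Subgroup.map_map]
    conv_rhs => rw [← σH, Subgroup.map_map]
    congr 1
    ext x
    simp
  · have h' : ¬ Nonempty ((G : Type _) ≃* (B : Type _)) := fun hb => h ⟨hb.some.trans e.symm⟩
    rw [Kf, Kf, dif_neg h, dif_neg h']
    simp

/-- The iterated transport chain. -/
noncomputable def Kn : ℕ → ∀ A : GrpCat, Subgroup A
  | 0, _ => ⊤
  | n + 1, A => (Kn n (GrpCat.of (Kf G H A))).map (Kf G H A).subtype

lemma Kn_one (A : GrpCat) : Kn G H 1 A = Kf G H A := by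
  show ((⊤ : Subgroup (GrpCat.of (Kf G H A))).map (Kf G H A).subtype) = _
  rw [← MonoidHom.range_eq_map, Subgroup.range_subtype]

lemma Kn_succ_le : ∀ (n : ℕ) (A : GrpCat), Kn G H (n + 1) A ≤ Kn G H n A := by
  intro n
  induction n with
  | zero => intro A; exact le_top
  | succ n ih =>
    intro A
    exact Subgroup.map_mono (ih (GrpCat.of (Kf G H A)))

end Aux
section Aux2

variable (G : GrpCat) (H : Subgroup G)

lemma Kn_map (hH : H.Characteristic) :
    ∀ (n : ℕ) {A B : GrpCat} (e : (A : Type _) ≃* (B : Type _)),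
      (Kn G H n A).map e.toMonoidHom = Kn G H n B := by
  intro n
  induction n with
  | zero =>
    intro A B e
    show Subgroup.map _ ⊤ = ⊤
    rw [← MonoidHom.range_eq_map]
    exact MonoidHom.range_eq_top_of_surjective _ e.surjective
  | succ n ih =>
    intro A B e
    let e' : ((GrpCat.of (Kf G H A)) : Type _) ≃* ((GrpCat.of (Kf G H B)) : Type _) :=
      (e.subgroupMap (Kf G H A)).trans (MulEquiv.subgroupCongr (Kf_map G H hH e))
    have comm : (Kf G H B).subtype.comp e'.toMonoidHom
        = e.toMonoidHom.comp (Kf G H A).subtype := by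
      ext x; rfl
    show ((Kn G H n (GrpCat.of (Kf G H A))).map (Kf G H A).subtype).map e.toMonoidHom
        = (Kn G H n (GrpCat.of (Kf G H B))).map (Kf G H B).subtype
    rw [Subgroup.map_map, ← comm, ← Subgroup.map_map, ih e']

/-- The morphism property. -/
def Wp : MorphismProperty GrpCat :=
  fun A B f => ∀ n : ℕ, (Kn G H n A).map f.hom ≤ Kn G H n B

instance Wp_mult : (Wp G H).IsMultiplicative where
  id_mem A := fun n => by
    show Subgroup.map (MonoidHom.id A) _ ≤ _
    rw [Subgroup.map_id]
  comp_mem {A B C} f g hf hg := fun n => by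
    show Subgroup.map (g.hom.comp f.hom) _ ≤ _
    rw [← Subgroup.map_map]
    exact le_trans (Subgroup.map_mono (hf n)) (hg n)

lemma iso_le_Wp (hH : H.Characteristic) :
    CategoryTheory.MorphismProperty.isomorphisms GrpCat ≤ Wp G H := by
  intro A B f hf
  haveI : CategoryTheory.IsIso f := hf
  intro n
  exact (Kn_map G H hH n ((CategoryTheory.asIso f).groupIsoToMulEquiv)).le

end Aux2
section Aux3

open CategoryTheory

variable (G : GrpCat) (H : Subgroup G)

/-- The restriction of a `Wp`-morphism to the `Kf`-subgroups. -/
noncomputable def resHom {A B : GrpCat} (f : A ⟶ B) (hf : Wp G H f) :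
    GrpCat.of (Kf G H A) ⟶ GrpCat.of (Kf G H B) :=
  GrpCat.ofHom ((f.hom.comp (Kf G H A).subtype).codRestrict
    (Kf G H B) (fun x => by
      have h1 := hf 1
      rw [Kn_one, Kn_one] at h1
      exact h1 ⟨x.1, x.2, rfl⟩))

lemma resHom_comm {A B : GrpCat} (f : A ⟶ B) (hf : Wp G H f) :
    (Kf G H B).subtype.comp (resHom G H f hf).hom
      = f.hom.comp (Kf G H A).subtype := by
  ext x; rfl

lemma resHom_mem {A B : GrpCat} (f : A ⟶ B) (hf : Wp G H f) :
    Wp G H (resHom G H f hf) := by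
  intro n
  rw [← Subgroup.map_le_map_iff_of_injective (Subgroup.subtype_injective (Kf G H B))]
  rw [Subgroup.map_map, resHom_comm, ← Subgroup.map_map]
  exact le_trans (hf (n + 1)) le_rfl

/-- The functor taking each group to its `Kf`-subgroup. -/
noncomputable def Cfun : WideSubcategory (Wp G H) ⥤ WideSubcategory (Wp G H) where
  obj A := WideSubcategory.mk (GrpCat.of (Kf G H A.obj))
  map {A B} f := ⟨resHom G H f.1 f.2, resHom_mem G H f.1 f.2⟩
  map_id A := by
    apply WideSubcategory.hom_ext
    exact GrpCat.ext (fun x => rfl)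
  map_comp {A B C} f g := by
    apply WideSubcategory.hom_ext
    exact GrpCat.ext (fun x => rfl)

/-- The natural transformation given by the inclusions. -/
noncomputable def etaNat : Cfun G H ⟶ 𝟭 (WideSubcategory (Wp G H)) where
  app A := ⟨GrpCat.ofHom (Kf G H A.obj).subtype, fun n => Kn_succ_le G H n A.obj⟩
  naturality {A B} f := by
    apply WideSubcategory.hom_ext
    apply GrpCat.ext
    intro x
    rfl

end Aux3

theorem characteristic_iff_wideSubcategory_counit (G : GrpCat) (H : Subgroup G) :
    H.Characteristic ↔
      ∃ (W : MorphismProperty GrpCat) (hW : W.IsMultiplicative),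
        MorphismProperty.isomorphisms GrpCat ≤ W ∧
        (haveI := hW
          ∃ (C : WideSubcategory W ⥤ WideSubcategory W)
            (η : C ⟶ 𝟭 (WideSubcategory W)),
              H = MonoidHom.range (η.app (WideSubcategory.mk G)).1.hom) := by
  constructor
  · intro hH
    refine ⟨Wp G H, Wp_mult G H, iso_le_Wp G H hH, Cfun G H, etaNat G H, ?_⟩
    show H = MonoidHom.range (GrpCat.ofHom (Kf G H G).subtype).hom
    rw [show MonoidHom.range (GrpCat.ofHom (Kf G H G).subtype).hom = (Kf G H G).subtype.range from rfl,
      Subgroup.range_subtype, Kf_self G H hH]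
  · rintro ⟨W, hW, hiso, C, η, hrange⟩
    rw [Subgroup.characteristic_iff_map_le]
    intro φ
    haveI := hW
    let i : G ≅ G := MulEquiv.toGrpIso φ
    haveI : IsIso i.hom := inferInstance
    let m : WideSubcategory.mk (_P := W) G ⟶ WideSubcategory.mk G := ⟨i.hom, hiso i.hom this⟩
    have nat := η.naturality m
    have nat1 : (C.map m).1 ≫ (η.app (WideSubcategory.mk G)).1 =
        (η.app (WideSubcategory.mk G)).1 ≫ i.hom := congrArg InducedWideCategory.Hom.hom nat
    have nat2 : φ.toMonoidHom.comp (η.app (WideSubcategory.mk G)).1.hom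
        = (η.app (WideSubcategory.mk G)).1.hom.comp (C.map m).1.hom := congrArg GrpCat.Hom.hom nat1.symm
    rw [hrange, ← MonoidHom.range_comp, nat2, MonoidHom.range_comp]
    exact le_trans (Subgroup.map_mono le_top)
      (le_of_eq (MonoidHom.range_eq_map _).symm)
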